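/- arXiv:0904.0724 — 2 statements merged into one kernel-verified Lean document; each statement's English description precedes it below -/
import Mathlib

section
/- Let k be a positive integer and let G be a finite simple graph that is k-regular and k-edge-connected. Then for every vertex v of G, the induced subgraph of G on the complement of {v} is (⌊(k−1)/2⌋ + 1)-edge-connected; that is, deleting any set of at most ⌊(k−1)/2⌋ edges from the vertex-deleted subgraph G − v leaves it connected. -/
/-- A simple graph is `k`-regular if every vertex has exactly `k` neighbors. -/
def IsRegularGraph {V : Type*} (G : SimpleGraph V) (k : ℕ) : Prop :=
  ∀ v : V, (G.neighborSet v).ncard = k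

/-- A simple graph is `p`-edge-connected if deleting any set of at most `p - 1`
edges leaves a connected graph. -/
def EdgeConnected {V : Type*} (G : SimpleGraph V) (p : ℕ) : Prop :=
  ∀ E : Finset (Sym2 V), ↑E ⊆ G.edgeSet → E.card ≤ p - 1 →
    (G.deleteEdges ↑E).Connected

open Classical in
/-- Key cut lemma: if `P` is a property of vertices of `G - v` closed under
adjacency in `(G - v) \ E`, witnessed both to hold and fail somewhere, then
the `G`-cut around `{u | P u}` forces `k ≤ |E| + |N(v) ∩ {u | P u}|`. -/
lemma cut_aux {V : Type*} [Fintype V] (G : SimpleGraph V) (k : ℕ)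
    (hconn : EdgeConnected G k) (v : V)
    (E : Finset (Sym2 ({v}ᶜ : Set V)))
    (P : ({v}ᶜ : Set V) → Prop)
    (hclosed : ∀ p q, ((G.induce ({v}ᶜ : Set V)).deleteEdges ↑E).Adj p q → P p → P q)
    (x₀ : ({v}ᶜ : Set V)) (hx₀ : P x₀)
    (y₀ : ({v}ᶜ : Set V)) (hy₀ : ¬ P y₀) :
    k ≤ E.card + (G.neighborSet v ∩ {u : V | ∃ h : u ∈ ({v}ᶜ : Set V), P ⟨u, h⟩}).ncard := by
  set S : Set V := {u : V | ∃ h : u ∈ ({v}ᶜ : Set V), P ⟨u, h⟩} with hS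
  have hvS : v ∉ S := by
    rintro ⟨h, -⟩
    simp at h
  have hxS : (x₀ : V) ∈ S := ⟨x₀.2, by simpa using hx₀⟩
  have hyS : (y₀ : V) ∉ S := by
    rintro ⟨h, hp⟩
    exact hy₀ (by simpa using hp)
  by_contra hlt
  push_neg at hlt
  -- the cut edges in `G`
  set Cset : Set (Sym2 V) :=
    {e | e ∈ G.edgeSet ∧ ∃ a b, e = s(a, b) ∧ a ∈ S ∧ b ∉ S} with hCset
  have hCfin : Cset.Finite := Set.toFinite _
  set C : Finset (Sym2 V) := hCfin.toFinset with hC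
  -- every cut edge comes from `E` or is incident to `v`
  have hsub : C ⊆ E.image (Sym2.map (Subtype.val)) ∪
      ((G.neighborSet v ∩ S).toFinite.toFinset.image (fun a => s(v, a))) := by
    intro e he
    rw [hC, Set.Finite.mem_toFinset] at he
    obtain ⟨hedge, a, b, rfl, haS, hbS⟩ := he
    have hadj : G.Adj a b := hedge
    have hav : a ∈ ({v}ᶜ : Set V) := haS.1
    by_cases hbv : b = v
    · subst hbv
      apply Finset.mem_union_right
      rw [Finset.mem_image]
      refine ⟨a, ?_, Sym2.eq_swap⟩
      rw [Set.Finite.mem_toFinset]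
      exact ⟨hadj.symm, haS⟩
    · have hbv' : b ∈ ({v}ᶜ : Set V) := by simpa using hbv
      have hmem : s((⟨a, hav⟩ : ({v}ᶜ : Set V)), ⟨b, hbv'⟩) ∈ E := by
        by_contra hnot
        have hadj' : ((G.induce ({v}ᶜ : Set V)).deleteEdges ↑E).Adj ⟨a, hav⟩ ⟨b, hbv'⟩ := by
          rw [SimpleGraph.deleteEdges_adj]
          exact ⟨hadj, hnot⟩
        obtain ⟨h, hp⟩ := haS
        have : P ⟨b, hbv'⟩ := hclosed _ _ hadj' (by convert hp)
        exact hbS ⟨hbv', this⟩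
      apply Finset.mem_union_left
      rw [Finset.mem_image]
      exact ⟨_, hmem, rfl⟩
  have hcard : C.card ≤ k - 1 := by
    have h1 := Finset.card_le_card hsub
    have h2 := Finset.card_union_le (E.image (Sym2.map (Subtype.val : ({v}ᶜ : Set V) → V)))
      ((G.neighborSet v ∩ S).toFinite.toFinset.image (fun a => s(v, a)))
    have h3 := Finset.card_image_le (s := E) (f := Sym2.map (Subtype.val : ({v}ᶜ : Set V) → V))
    have h4 := Finset.card_image_le (s := (G.neighborSet v ∩ S).toFinite.toFinset)
      (f := fun a => s(v, a))
    have h5 : (G.neighborSet v ∩ S).toFinite.toFinset.card = (G.neighborSet v ∩ S).ncard :=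
      (Set.ncard_eq_toFinset_card _ (Set.toFinite _)).symm
    omega
  have hCsub : ↑C ⊆ G.edgeSet := by
    intro e he
    exact ((Set.Finite.mem_toFinset hCfin).mp (Finset.mem_coe.mp he)).1
  have hconn' := hconn C hCsub hcard
  obtain ⟨w⟩ := hconn' (x₀ : V) (y₀ : V)
  obtain ⟨d, _, hd1, hd2⟩ := w.exists_boundary_dart S hxS hyS
  have hadj := d.adj
  rw [SimpleGraph.deleteEdges_adj] at hadj
  exact hadj.2 (Finset.mem_coe.mpr ((Set.Finite.mem_toFinset hCfin).mpr
    ⟨hadj.1, d.toProd.1, d.toProd.2, rfl, hd1, hd2⟩))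

/-- If `G` is a finite simple graph which is `k`-regular and `k`-edge-connected
(`k > 0`), then for every vertex `v` the vertex-deleted subgraph `G - v` is
`(⌊(k-1)/2⌋ + 1)`-edge-connected. -/
theorem vertexDeleted_edgeConnected {V : Type*} [Fintype V] (G : SimpleGraph V)
    (k : ℕ) (hk : 0 < k) (hreg : IsRegularGraph G k) (hconn : EdgeConnected G k)
    (v : V) :
    EdgeConnected (G.induce ({v}ᶜ : Set V)) ((k - 1) / 2 + 1) := by
  intro E hE hEcard
  have hEcard' : E.card ≤ (k - 1) / 2 := by omega
  -- there is a vertex other than `v`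
  have hNv : (G.neighborSet v).ncard = k := hreg v
  have hne : (G.neighborSet v).Nonempty := by
    rw [← Set.ncard_pos (Set.toFinite _), hNv]; exact hk
  obtain ⟨w, hw⟩ := hne
  have hwv : w ∈ ({v}ᶜ : Set V) := by
    simpa using (G.ne_of_adj hw).symm
  rw [SimpleGraph.connected_iff]
  refine ⟨?_, ⟨⟨w, hwv⟩⟩⟩
  · -- preconnected
    intro x y
    by_contra hxy
    set H := (G.induce ({v}ᶜ : Set V)).deleteEdges ↑E with hH
    have h1 := cut_aux G k hconn v E (fun z => H.Reachable x z)
      (fun p q hadj hp => hp.trans hadj.reachable) x (SimpleGraph.Reachable.refl x) y hxy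
    have h2 := cut_aux G k hconn v E (fun z => ¬ H.Reachable x z)
      (fun p q hadj hp hq => hp (hq.trans hadj.symm.reachable)) y hxy x
      (fun h => h (SimpleGraph.Reachable.refl x))
    set S₁ : Set V := {u : V | ∃ h : u ∈ ({v}ᶜ : Set V), H.Reachable x ⟨u, h⟩}
    set S₂ : Set V := {u : V | ∃ h : u ∈ ({v}ᶜ : Set V), ¬ H.Reachable x ⟨u, h⟩}
    have hdisj : Disjoint (G.neighborSet v ∩ S₁) (G.neighborSet v ∩ S₂) := by
      rw [Set.disjoint_left]
      rintro u ⟨-, h, hp⟩ ⟨-, h', hp'⟩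
      exact hp' (by convert hp)
    have hsum : (G.neighborSet v ∩ S₁).ncard + (G.neighborSet v ∩ S₂).ncard ≤ k := by
      rw [← Set.ncard_union_eq hdisj (Set.toFinite _) (Set.toFinite _), ← hNv]
      exact Set.ncard_le_ncard (by intro u hu; rcases hu with h | h <;> exact h.1)
        (Set.toFinite _)
    omega
end

section
/- Let G₁ and G₂ be finite simple graphs on disjoint vertex sets V₁ and V₂, let v₁ ∈ V₁ and v₂ ∈ V₂ have the same degree, and let G be a splice of G₁ and G₂ at (v₁, v₂) along some bijection σ. If the vertex-deleted subgraph G₂ − v₂ is connected, then G₁ is a minor of G. -/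
/-- The splice of `G₁` and `G₂` at `(v₁, v₂)` along the bijection `σ` between
the neighbors of `v₁` and the neighbors of `v₂`. -/
def splice {V₁ V₂ : Type*} (G₁ : SimpleGraph V₁) (G₂ : SimpleGraph V₂)
    (v₁ : V₁) (v₂ : V₂) (σ : G₁.neighborSet v₁ ≃ G₂.neighborSet v₂) :
    SimpleGraph ({x : V₁ // x ≠ v₁} ⊕ {y : V₂ // y ≠ v₂}) where
  Adj a b :=
    match a, b with
    | Sum.inl u, Sum.inl w => G₁.Adj u.1 w.1
    | Sum.inr u, Sum.inr w => G₂.Adj u.1 w.1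
    | Sum.inl u, Sum.inr w => ∃ h : u.1 ∈ G₁.neighborSet v₁, (σ ⟨u.1, h⟩ : V₂) = w.1
    | Sum.inr w, Sum.inl u => ∃ h : u.1 ∈ G₁.neighborSet v₁, (σ ⟨u.1, h⟩ : V₂) = w.1
  symm := ⟨by
    rintro (u | u) (w | w) h
    · exact G₁.adj_symm h
    · exact h
    · exact h
    · exact G₂.adj_symm h⟩
  loopless := ⟨by
    rintro (u | u) h
    · exact G₁.ne_of_adj h rfl
    · exact G₂.ne_of_adj h rfl⟩

/-- `H` is a minor of `G` if each vertex `x` of `H` can be assigned a nonempty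
branch set `B x` of vertices of `G` such that the branch sets are pairwise
disjoint, each induces a connected subgraph of `G`, and every edge of `H` is
witnessed by an edge of `G` between the corresponding branch sets. -/
def IsMinor {W V : Type*} (H : SimpleGraph W) (G : SimpleGraph V) : Prop :=
  ∃ B : W → Set V,
    (∀ x, (B x).Nonempty) ∧
    (Pairwise fun x y => Disjoint (B x) (B y)) ∧
    (∀ x, (G.induce (B x)).Connected) ∧
    (∀ x y, H.Adj x y → ∃ a ∈ B x, ∃ b ∈ B y, G.Adj a b)

lemma connected_induce_singleton {V : Type*} (G : SimpleGraph V) (a : V) :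
    (G.induce {a}).Connected := by
  rw [SimpleGraph.connected_iff]
  refine ⟨fun x y => ?_, ⟨⟨a, rfl⟩⟩⟩
  rw [Subsingleton.elim x y]

/-- If the vertex-deleted subgraph `G₂ - v₂` is connected, then `G₁` is a
minor of any splice of `G₁` and `G₂` at `(v₁, v₂)`. -/
theorem isMinor_of_splice {V₁ V₂ : Type*} [Fintype V₁] [Fintype V₂]
    (G₁ : SimpleGraph V₁) (G₂ : SimpleGraph V₂) (v₁ : V₁) (v₂ : V₂)
    (σ : G₁.neighborSet v₁ ≃ G₂.neighborSet v₂)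
    (hconn : (G₂.induce ({v₂}ᶜ : Set V₂)).Connected) :
    IsMinor G₁ (splice G₁ G₂ v₁ v₂ σ) := by
  classical
  set G := splice G₁ G₂ v₁ v₂ σ with hG
  refine ⟨fun x => if h : x = v₁ then Set.range Sum.inr else {Sum.inl ⟨x, h⟩}, ?_, ?_, ?_, ?_⟩
  · intro x
    dsimp only
    by_cases h : x = v₁
    · rw [dif_pos h]
      obtain ⟨⟨y, hy⟩⟩ := hconn.nonempty
      exact ⟨Sum.inr ⟨y, hy⟩, ⟨_, rfl⟩⟩
    · rw [dif_neg h]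
      exact ⟨_, rfl⟩
  · intro x y hxy
    dsimp only
    by_cases hx : x = v₁ <;> by_cases hy : y = v₁
    · exact absurd (hx.trans hy.symm) hxy
    · rw [dif_pos hx, dif_neg hy]; simp [Set.disjoint_left]
    · rw [dif_neg hx, dif_pos hy]; simp [Set.disjoint_right]
    · rw [dif_neg hx, dif_neg hy]
      simp [Set.disjoint_left, hxy, Subtype.ext_iff]
  · intro x
    dsimp only
    by_cases h : x = v₁
    · rw [dif_pos h]
      have e : (G₂.induce ({v₂}ᶜ : Set V₂)) ≃g (G.induce (Set.range Sum.inr)) := by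
        refine ⟨⟨fun y => ⟨Sum.inr ⟨y.1, y.2⟩, ⟨⟨y.1, y.2⟩, rfl⟩⟩,
          fun z => match z with
            | ⟨Sum.inr w, _⟩ => ⟨w.1, w.2⟩
            | ⟨Sum.inl w, hw⟩ => absurd hw (by simp), ?_, ?_⟩, ?_⟩
        · rintro ⟨y, hy⟩; rfl
        · rintro ⟨z, hz⟩
          obtain ⟨w, rfl⟩ := hz
          rfl
        · rintro ⟨y, hy⟩ ⟨z, hz⟩
          rfl
      exact (e.connected_iff).mp hconn
    · rw [dif_neg h]
      exact connected_induce_singleton G _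
  · intro x y hxy
    dsimp only
    have hne := hxy.ne
    by_cases hx : x = v₁ <;> by_cases hy : y = v₁
    · exact absurd (hx.trans hy.symm) hne
    · rw [dif_pos hx, dif_neg hy]
      have hyN : y ∈ G₁.neighborSet v₁ := by rw [← hx, SimpleGraph.mem_neighborSet]; exact hxy
      have hσ : (σ ⟨y, hyN⟩ : V₂) ≠ v₂ := (σ ⟨y, hyN⟩).2.ne'
      exact ⟨Sum.inr ⟨(σ ⟨y, hyN⟩ : V₂), hσ⟩, ⟨_, rfl⟩, Sum.inl ⟨y, hy⟩, rfl, ⟨hyN, rfl⟩⟩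
    · rw [dif_neg hx, dif_pos hy]
      have hxN : x ∈ G₁.neighborSet v₁ := by rw [← hy, SimpleGraph.mem_neighborSet]; exact hxy.symm
      have hσ : (σ ⟨x, hxN⟩ : V₂) ≠ v₂ := (σ ⟨x, hxN⟩).2.ne'
      exact ⟨Sum.inl ⟨x, hx⟩, rfl, Sum.inr ⟨(σ ⟨x, hxN⟩ : V₂), hσ⟩, ⟨_, rfl⟩, ⟨hxN, rfl⟩⟩
    · rw [dif_neg hx, dif_neg hy]
      exact ⟨Sum.inl ⟨x, hx⟩, rfl, Sum.inl ⟨y, hy⟩, rfl, hxy⟩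
end
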